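/- Let F be a finite field of characteristic p and order q, and let d be an invertible exponent over F that is nondegenerate over F. Then there exists a ∈ F with W_{F,d}(a) a positive real number, and there exists b ∈ F with W_{F,d}(b) a negative real number. -/

import Mathlib

open scoped BigOperators

/-- The canonical additive character of a finite field `F` of characteristic `p`:
`ψ(x) = exp(2πi·Tr(x)/p)`, where `Tr` is the absolute trace from `F` to `𝔽_p = ZMod p`. -/
noncomputable def canonicalPsi (F : Type*) [Field F] [Fintype F] (p : ℕ) [CharP F p]
    (x : F) : ℂ :=
  letI : Algebra (ZMod p) F := ZMod.algebra F p
  Complex.exp (2 * Real.pi * Complex.I * ((Algebra.trace (ZMod p) F x).val : ℂ) / (p : ℂ))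

/-- The Weil sum `W_{F,d}(a) = ∑_{x ∈ F} ψ(x^d − a·x)`. -/
noncomputable def weilSum (F : Type*) [Field F] [Fintype F] (p : ℕ) [CharP F p]
    (d : ℕ) (a : F) : ℂ :=
  ∑ x : F, canonicalPsi F p (x ^ d - a * x)

namespace WeilAux
set_option linter.unusedSectionVars false
set_option linter.unnecessarySimpa false

lemma zeta_pow (p : ℕ) [Fact p.Prime] : Complex.exp (2 * Real.pi * Complex.I / p) ^ p = 1 := by
  have hp : (p : ℂ) ≠ 0 := Nat.cast_ne_zero.mpr (Fact.out (p := p.Prime)).ne_zero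
  rw [← Complex.exp_nat_mul]
  rw [show (p : ℂ) * (2 * Real.pi * Complex.I / p) = 2 * Real.pi * Complex.I by field_simp]
  exact Complex.exp_two_pi_mul_I

section
variable (p : ℕ) [Fact p.Prime] (F : Type*) [Field F] [Fintype F] [CharP F p]

lemma trace_nondeg :
    letI : Algebra (ZMod p) F := ZMod.algebra F p
    ∀ {z : F}, z ≠ 0 → ∃ b : F, Algebra.trace (ZMod p) F (z * b) ≠ 0 := by
  letI : Algebra (ZMod p) F := ZMod.algebra F p
  haveI : Module.Finite (ZMod p) F := Module.Finite.of_finite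
  haveI : Algebra.IsSeparable (ZMod p) F := inferInstance
  intro z hz
  have htr := (traceForm_nondegenerate (ZMod p) F).1 z
  simp_rw [Algebra.traceForm_apply] at htr
  by_contra! hf
  exact hz (htr hf)

noncomputable def psiChar : AddChar F ℂ :=
  letI : Algebra (ZMod p) F := ZMod.algebra F p
  haveI : NeZero p := ⟨(Fact.out (p := p.Prime)).ne_zero⟩
  (AddChar.zmodChar p (zeta_pow p)).compAddMonoidHom (Algebra.trace (ZMod p) F).toAddMonoidHom

lemma psiChar_apply (x : F) : psiChar p F x = canonicalPsi F p x := by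
  letI : Algebra (ZMod p) F := ZMod.algebra F p
  haveI : NeZero p := ⟨(Fact.out (p := p.Prime)).ne_zero⟩
  show (AddChar.zmodChar p (zeta_pow p)) (Algebra.trace (ZMod p) F x) = _
  rw [AddChar.zmodChar_apply, ← Complex.exp_nat_mul, canonicalPsi]
  ring_nf

lemma psiChar_eq_one_iff (x : F) :
    letI : Algebra (ZMod p) F := ZMod.algebra F p
    (psiChar p F x = 1 ↔ Algebra.trace (ZMod p) F x = 0) := by
  letI : Algebra (ZMod p) F := ZMod.algebra F p
  haveI : NeZero p := ⟨(Fact.out (p := p.Prime)).ne_zero⟩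
  have hprim : AddChar.IsPrimitive (AddChar.zmodChar p (zeta_pow p)) := by
    apply AddChar.zmodChar_primitive_of_primitive_root
    have := Complex.isPrimitiveRoot_exp p (Fact.out (p := p.Prime)).ne_zero
    convert this using 2
  exact hprim.zmod_char_eq_one_iff p (Algebra.trace (ZMod p) F x)

lemma psiChar_prim : (psiChar p F).IsPrimitive := by
  letI : Algebra (ZMod p) F := ZMod.algebra F p
  apply AddChar.IsPrimitive.of_ne_one
  obtain ⟨b, hb⟩ := trace_nondeg p F (z := 1) one_ne_zero
  intro h1
  apply hb
  rw [one_mul] at hb ⊢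
  have := psiChar_eq_one_iff p F b
  rw [h1] at this
  exact this.mp rfl

lemma psiChar_abs (x : F) : ‖psiChar p F x‖ = 1 := by
  letI : Algebra (ZMod p) F := ZMod.algebra F p
  haveI : NeZero p := ⟨(Fact.out (p := p.Prime)).ne_zero⟩
  show ‖(AddChar.zmodChar p (zeta_pow p)) (Algebra.trace (ZMod p) F x)‖ = 1
  rw [AddChar.zmodChar_apply, norm_pow]
  rw [show 2 * (Real.pi:ℂ) * Complex.I / p = ((2 * Real.pi / p : ℝ) : ℂ) * Complex.I by
    push_cast; ring]
  rw [Complex.norm_exp_ofReal_mul_I, one_pow]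

lemma psiChar_conj (x : F) :
    (starRingEnd ℂ) (psiChar p F x) = psiChar p F (-x) := by
  have habs := psiChar_abs p F x
  have hmc : psiChar p F x * (starRingEnd ℂ) (psiChar p F x) = 1 := by
    rw [Complex.mul_conj, ← Complex.sq_norm, habs]; norm_num
  have hinv : psiChar p F x * psiChar p F (-x) = 1 := by
    rw [← AddChar.map_add_eq_mul, add_neg_cancel, AddChar.map_zero_eq_one]
  have hne : psiChar p F x ≠ 0 := by
    intro h; rw [h, norm_zero] at habs; norm_num at habs
  exact mul_left_cancel₀ hne (hmc.trans hinv.symm)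

end

lemma pow_congr (F : Type*) [Field F] [Fintype F] {s t : ℕ} (hs : 1 ≤ s) (ht : 1 ≤ t)
    (h : s ≡ t [MOD Fintype.card F - 1]) (x : F) : x ^ s = x ^ t := by
  rcases eq_or_ne x 0 with rfl | hx
  · rw [zero_pow (by omega), zero_pow (by omega)]
  · wlog hle : s ≤ t generalizing s t
    · exact (this ht hs h.symm (by omega)).symm
    obtain ⟨c, hc⟩ := (Nat.modEq_iff_dvd' hle).mp h
    have ht' : t = s + (Fintype.card F - 1) * c := by omega
    rw [ht', pow_add, pow_mul, FiniteField.pow_card_sub_one_eq_one x hx, one_pow, mul_one]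

lemma neg_pow_d (F : Type*) [Field F] [Fintype F] (p : ℕ) [Fact p.Prime] [CharP F p]
    {d : ℕ} (hd : 0 < d) (hgcd : Nat.gcd d (Fintype.card F - 1) = 1)
    (x : F) : (-x) ^ d = -(x ^ d) := by
  rcases Nat.even_or_odd d with he | ho
  · have hq : ¬ (2 ∣ (Fintype.card F - 1)) := by
      intro h2
      have := Nat.dvd_gcd he.two_dvd h2
      rw [hgcd] at this; omega
    have hq2 : 2 ≤ Fintype.card F := Fintype.one_lt_card
    obtain ⟨n, hp, hcard⟩ := FiniteField.card F p
    have hpeven : p = 2 := by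
      by_contra hp2
      have hodd : Odd p := hp.odd_of_ne_two hp2
      have hoq : Odd (Fintype.card F) := by rw [hcard]; exact hodd.pow
      obtain ⟨m, hm⟩ := hoq
      omega
    haveI : CharP F 2 := by rw [← hpeven]; infer_instance
    have hneg : (-x) = x := CharTwo.neg_eq (R := F) x
    rw [hneg, eq_comm, neg_eq_iff_add_eq_zero, ← two_mul]
    have h2 : (2 : F) = 0 := by
      have := CharP.cast_eq_zero F 2
      exact_mod_cast this
    rw [h2, zero_mul]
  · exact ho.neg_pow x

lemma exists_inv_exp (F : Type*) [Field F] [Fintype F] {d : ℕ} (hd : 0 < d)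
    (hgcd : Nat.gcd d (Fintype.card F - 1) = 1) :
    ∃ e : ℕ, 1 ≤ e ∧ d * e ≡ 1 [MOD Fintype.card F - 1] := by
  have hq2 : 2 ≤ Fintype.card F := Fintype.one_lt_card
  have htot : 1 ≤ Nat.totient (Fintype.card F - 1) := Nat.totient_pos.mpr (by omega)
  refine ⟨d ^ (Nat.totient (Fintype.card F - 1) - 1),
    Nat.one_le_iff_ne_zero.mpr (pow_ne_zero _ (by omega)), ?_⟩
  have h1 : d * d ^ (Nat.totient (Fintype.card F - 1) - 1)
      = d ^ (Nat.totient (Fintype.card F - 1)) := by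
    rw [← pow_succ']
    congr 1
    omega
  rw [h1]
  exact Nat.ModEq.pow_totient hgcd


lemma choose_pow_mul (p : ℕ) [Fact p.Prime] (m : ℕ) :
    ∀ s : ℕ, (((p ^ s * m).choose (p ^ s) : ZMod p)) = (m : ZMod p) := by
  intro s
  induction s with
  | zero => simp [Nat.choose_one_right]
  | succ s ih =>
    have hp0 : 0 < p := (Fact.out (p := p.Prime)).pos
    have key := Choose.choose_modEq_choose_mod_mul_choose_div_nat
      (p := p) (n := p ^ (s+1) * m) (k := p ^ (s+1))
    have hdvd1 : p ∣ p ^ (s+1) * m := (dvd_pow_self p (Nat.succ_ne_zero s)).mul_right m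
    have hdvd2 : p ∣ p ^ (s+1) := dvd_pow_self p (Nat.succ_ne_zero s)
    have hn : (p ^ (s+1) * m) % p = 0 := Nat.mod_eq_zero_of_dvd hdvd1
    have hk : (p ^ (s+1)) % p = 0 := Nat.mod_eq_zero_of_dvd hdvd2
    have hdiv1 : (p ^ (s+1) * m) / p = p ^ s * m := by
      rw [pow_succ', mul_assoc, Nat.mul_div_cancel_left _ hp0]
    have hdiv2 : (p ^ (s+1)) / p = p ^ s := by
      rw [pow_succ', Nat.mul_div_cancel_left _ hp0]
    rw [hn, hk, hdiv1, hdiv2, Nat.choose_self, one_mul] at key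
    calc ((p ^ (s+1) * m).choose (p ^ (s+1)) : ZMod p)
        = ((p ^ s * m).choose (p ^ s) : ZMod p) :=
          (ZMod.natCast_eq_natCast_iff _ _ _).mpr key
      _ = (m : ZMod p) := ih

lemma eq_pow_of_choose (p : ℕ) [Fact p.Prime] (E : ℕ) (hE : 1 ≤ E)
    (h : ∀ i, 0 < i → i < E → p ∣ E.choose i) : ∃ s, E = p ^ s := by
  have hp := Fact.out (p := p.Prime)
  obtain ⟨s, m, hEm, hpm⟩ : ∃ s m, p ^ s * m = E ∧ ¬ p ∣ m :=
    ⟨E.factorization p, E / p ^ E.factorization p,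
      Nat.ordProj_mul_ordCompl_eq_self E p, Nat.not_dvd_ordCompl hp (by omega)⟩
  rcases eq_or_ne m 1 with h1 | h1
  · exact ⟨s, by rw [← hEm, h1, mul_one]⟩
  · exfalso
    have hm0 : 0 < m := Nat.pos_of_ne_zero (fun h0 => by rw [h0] at hEm; omega)
    have hm2 : 2 ≤ m := by omega
    have hps : 0 < p ^ s := pow_pos hp.pos s
    have hlt : p ^ s < E := by nlinarith
    have hdvd := h (p ^ s) (pow_pos hp.pos s) hlt
    have := choose_pow_mul p m s
    rw [hEm] at this
    rw [(ZMod.natCast_eq_zero_iff _ _).mpr hdvd] at this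
    exact hpm ((ZMod.natCast_eq_zero_iff _ _).mp this.symm)


theorem degenerate_of_trace_eq (p : ℕ) [Fact p.Prime] (F : Type*) [Field F] [Fintype F]
    [CharP F p] (d : ℕ) (hd : 0 < d) (hgcd : Nat.gcd d (Fintype.card F - 1) = 1) (a : F)
    (hTr : letI : Algebra (ZMod p) F := ZMod.algebra F p
      ∀ x : F, Algebra.trace (ZMod p) F (x ^ d) = Algebra.trace (ZMod p) F (a * x)) :
    ∃ k : ℕ, d ≡ p ^ k [MOD Fintype.card F - 1] := by
  letI : Algebra (ZMod p) F := ZMod.algebra F p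
  set q := Fintype.card F with hq
  have hq2 : 2 ≤ q := Fintype.one_lt_card
  obtain ⟨e, he1, hde⟩ := exists_inv_exp F hd hgcd
  -- x ^ (e * d) = x
  have hpow : ∀ x : F, (x ^ e) ^ d = x := by
    intro x
    rw [← pow_mul, mul_comm e d]
    calc x ^ (d * e) = x ^ 1 := pow_congr F (Nat.mul_pos hd he1) le_rfl hde x
      _ = x := pow_one x
  -- a ≠ 0
  have ha : a ≠ 0 := by
    rintro rfl
    obtain ⟨b, hb⟩ := trace_nondeg p F (z := (1:F)) one_ne_zero
    apply hb
    rw [one_mul]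
    have := hTr (b ^ e)
    rw [hpow b] at this
    rw [this, zero_mul, map_zero]
  -- main bilinear identity
  have H : ∀ c u : F, Algebra.trace (ZMod p) F (c ^ d * u)
      = Algebra.trace (ZMod p) F (a * c * u ^ e) := by
    intro c u
    have := hTr (c * u ^ e)
    rw [mul_pow, hpow u] at this
    rw [this]; ring_nf
  -- additivity of x ↦ x ^ e
  have hadd : ∀ u v : F, (u + v) ^ e = u ^ e + v ^ e := by
    intro u v
    have key : ∀ b : F, Algebra.trace (ZMod p) F
        (((u + v) ^ e - u ^ e - v ^ e) * b) = 0 := by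
      intro b
      set c := a⁻¹ * b with hc
      have hac : a * c = b := by rw [hc, ← mul_assoc, mul_inv_cancel₀ ha, one_mul]
      have lin : Algebra.trace (ZMod p) F (c ^ d * (u + v))
          = Algebra.trace (ZMod p) F (c ^ d * u) + Algebra.trace (ZMod p) F (c ^ d * v) := by
        rw [mul_add, map_add]
      rw [H c (u + v), H c u, H c v] at lin
      have expand : ((u + v) ^ e - u ^ e - v ^ e) * b
          = a * c * (u+v) ^ e - a * c * u ^ e - a * c * v ^ e := by
        rw [hac]; ring
      rw [expand, map_sub, map_sub, lin]
      ring
    by_contra hne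
    have hz : (u + v) ^ e - u ^ e - v ^ e ≠ 0 := fun h => hne (by linear_combination h)
    obtain ⟨b, hb⟩ := trace_nondeg p F hz
    exact hb (key b)
  -- reduce e modulo q - 1 to E with 1 ≤ E ≤ q - 1
  set E := (e - 1) % (q - 1) + 1 with hE
  have hE1 : 1 ≤ E := Nat.le_add_left 1 _
  have hEle : E ≤ q - 1 := by
    have := Nat.mod_lt (e - 1) (y := q - 1) (by omega)
    omega
  have hEe : e ≡ E [MOD q - 1] := by
    have h1 : e - 1 ≡ (e - 1) % (q - 1) [MOD q - 1] := (Nat.mod_modEq _ _).symm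
    have h2 := h1.add_right 1
    have he' : e - 1 + 1 = e := by omega
    rwa [he'] at h2
  have hpowE : ∀ x : F, x ^ e = x ^ E := fun x => pow_congr F he1 hE1 hEe x
  -- the additive identity with v = 1, in terms of E
  have haddE : ∀ x : F, (x + 1) ^ E = x ^ E + 1 := by
    intro x
    have := hadd x 1
    rw [one_pow, hpowE, hpowE] at this
    exact this
  -- polynomial vanishing
  have hP : ((Polynomial.X + 1) ^ E - Polynomial.X ^ E - 1 : Polynomial F) = 0 := by
    apply Polynomial.eq_zero_of_natDegree_lt_card_of_eval_eq_zero' _ Finset.univ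
    · intro x _
      simp only [Polynomial.eval_sub, Polynomial.eval_pow, Polynomial.eval_add,
        Polynomial.eval_one, Polynomial.eval_X]
      rw [haddE x]; ring
    · have hd1 : (((Polynomial.X + 1) ^ E : Polynomial F)).natDegree ≤ E := by
        have hXC : (Polynomial.X + 1 : Polynomial F) = Polynomial.X + Polynomial.C 1 := by
          rw [map_one]
        rw [hXC, Polynomial.natDegree_pow, Polynomial.natDegree_X_add_C, mul_one]
      have hd2 : ((Polynomial.X ^ E : Polynomial F)).natDegree ≤ E := by
        simpa using Polynomial.natDegree_pow_le (p := (Polynomial.X : Polynomial F)) (n := E)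
      have hcard : (Finset.univ : Finset F).card = q := by simp [hq]
      rw [hcard]
      calc (((Polynomial.X + 1) ^ E - Polynomial.X ^ E - 1 : Polynomial F)).natDegree
          ≤ max ((((Polynomial.X + 1) ^ E - Polynomial.X ^ E : Polynomial F)).natDegree)
            ((1 : Polynomial F).natDegree) := Polynomial.natDegree_sub_le _ _
        _ ≤ max (max ((((Polynomial.X + 1) ^ E : Polynomial F)).natDegree)
              (((Polynomial.X ^ E : Polynomial F)).natDegree)) 0 := by
            apply max_le_max (Polynomial.natDegree_sub_le _ _)
            simp
        _ ≤ E := max_le (max_le hd1 hd2) (Nat.zero_le E)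
        _ < q := by omega
  -- all middle binomial coefficients vanish mod p
  have hdvd : ∀ i, 0 < i → i < E → p ∣ E.choose i := by
    intro i hi0 hiE
    have hco := congrArg (fun P => Polynomial.coeff P i) hP
    simp only [Polynomial.coeff_sub, Polynomial.coeff_zero] at hco
    rw [Polynomial.coeff_X_add_one_pow, Polynomial.coeff_X_pow, Polynomial.coeff_one] at hco
    rw [if_neg (by omega), if_neg (by omega)] at hco
    have : ((E.choose i : ℕ) : F) = 0 := by
      have := hco
      simpa using this
    exact (CharP.cast_eq_zero_iff F p _).mp this
  obtain ⟨s, hEs⟩ := eq_pow_of_choose p E hE1 hdvd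
  -- now d * p ^ s ≡ 1 [MOD q - 1]
  have hdE : d * E ≡ 1 [MOD q - 1] := (Nat.ModEq.mul_left d hEe).symm.trans hde
  have hdps : d * p ^ s ≡ 1 [MOD q - 1] := by rwa [hEs] at hdE
  -- q = p ^ n
  obtain ⟨n, hp, hcard⟩ := FiniteField.card F p
  have hn1 : 1 ≤ (n : ℕ) := n.one_le
  have hpn : p ^ (n : ℕ) ≡ 1 [MOD q - 1] := by
    have h1 : 1 ≤ p ^ (n : ℕ) := Nat.one_le_pow _ _ hp.pos
    have h2 : q - 1 ∣ p ^ (n : ℕ) - 1 := by rw [← hcard]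
    exact ((Nat.modEq_iff_dvd' h1).mpr h2).symm
  refine ⟨s * ((n : ℕ) - 1), ?_⟩
  calc d ≡ d * p ^ (s * (n : ℕ)) [MOD q - 1] := by
        have h1 : p ^ (s * (n : ℕ)) ≡ 1 [MOD q - 1] := by
          rw [mul_comm s, pow_mul]
          have := hpn.pow s
          simpa using this
        have h2 := (Nat.ModEq.mul_left d h1).symm
        simpa using h2
    _ = (d * p ^ s) * p ^ (s * ((n : ℕ) - 1)) := by
        have hsplit : s * (n : ℕ) = s + s * ((n : ℕ) - 1) := by
          obtain ⟨m, hm⟩ := Nat.exists_eq_add_of_le hn1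
          rw [hm, Nat.add_sub_cancel_left]
          ring
        rw [mul_assoc, ← pow_add, hsplit]
    _ ≡ 1 * p ^ (s * ((n : ℕ) - 1)) [MOD q - 1] := Nat.ModEq.mul_right _ hdps
    _ = p ^ (s * ((n : ℕ) - 1)) := one_mul _


section
variable (p : ℕ) [Fact p.Prime] (F : Type*) [Field F] [Fintype F] [CharP F p]
variable (d : ℕ)


noncomputable def W (a : F) : ℂ := ∑ x : F, psiChar p F (x ^ d - a * x)

-- first moment
lemma moment1 (hd : 0 < d) : ∑ a : F, W p F d a = (Fintype.card F : ℂ) := by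
  classical
  simp only [W]
  rw [Finset.sum_comm]
  have hterm : ∀ x a : F, psiChar p F (x ^ d - a * x)
      = psiChar p F (x ^ d) * psiChar p F (a * (-x)) := by
    intro x a
    rw [← AddChar.map_add_eq_mul]
    congr 1
    ring
  calc ∑ x : F, ∑ a : F, psiChar p F (x ^ d - a * x)
      = ∑ x : F, psiChar p F (x ^ d) * ((if (-x : F) = 0 then (Fintype.card F : ℂ) else 0)) := by
        apply Finset.sum_congr rfl
        intro x _
        rw [show ∑ a : F, psiChar p F (x ^ d - a * x)
            = ∑ a : F, psiChar p F (x ^ d) * psiChar p F (a * (-x)) from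
          Finset.sum_congr rfl fun a _ => hterm x a]
        rw [← Finset.mul_sum, AddChar.sum_mulShift _ (psiChar_prim p F)]
        norm_num
    _ = (Fintype.card F : ℂ) := by
        rw [Finset.sum_eq_single (0 : F)]
        · simp [zero_pow hd.ne']
        · intro x _ hx
          rw [if_neg (by simpa using hx), mul_zero]
        · intro h; exact absurd (Finset.mem_univ _) h

-- second moment
lemma moment2 (hd : 0 < d) (hgcd : Nat.gcd d (Fintype.card F - 1) = 1) :
    ∑ a : F, (W p F d a) ^ 2 = (Fintype.card F : ℂ) ^ 2 := by
  classical
  have hsq : ∀ a : F, (W p F d a) ^ 2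
      = ∑ x : F, ∑ y : F, psiChar p F (x ^ d + y ^ d) * psiChar p F (a * (-(x + y))) := by
    intro a
    rw [sq, W, Finset.sum_mul_sum]
    apply Finset.sum_congr rfl; intro x _
    apply Finset.sum_congr rfl; intro y _
    rw [← AddChar.map_add_eq_mul, ← AddChar.map_add_eq_mul]
    congr 1
    ring
  calc ∑ a : F, (W p F d a) ^ 2
      = ∑ a : F, ∑ x : F, ∑ y : F,
          psiChar p F (x ^ d + y ^ d) * psiChar p F (a * (-(x + y))) :=
        Finset.sum_congr rfl fun a _ => hsq a
    _ = ∑ x : F, ∑ y : F, ∑ a : F,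
          psiChar p F (x ^ d + y ^ d) * psiChar p F (a * (-(x + y))) := by
        rw [Finset.sum_comm]
        apply Finset.sum_congr rfl; intro x _
        rw [Finset.sum_comm]
    _ = ∑ x : F, ∑ y : F, psiChar p F (x ^ d + y ^ d)
          * ((if (-(x + y) : F) = 0 then (Fintype.card F : ℂ) else 0)) := by
        apply Finset.sum_congr rfl; intro x _
        apply Finset.sum_congr rfl; intro y _
        rw [← Finset.mul_sum, AddChar.sum_mulShift _ (psiChar_prim p F)]
        norm_num
    _ = ∑ x : F, (Fintype.card F : ℂ) := by
        apply Finset.sum_congr rfl; intro x _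
        rw [Finset.sum_eq_single (-x : F)]
        · rw [neg_pow_d F p hd hgcd x, add_neg_cancel, if_pos (by ring), AddChar.map_zero_eq_one,
            one_mul]
        · intro y _ hy
          rw [if_neg (fun h => hy (by linear_combination -h)), mul_zero]
        · intro h; exact absurd (Finset.mem_univ _) h
    _ = (Fintype.card F : ℂ) ^ 2 := by
        rw [Finset.sum_const, Finset.card_univ]
        rw [nsmul_eq_mul]
        ring

-- reality
lemma W_real (hd : 0 < d) (hgcd : Nat.gcd d (Fintype.card F - 1) = 1) (a : F) :
    W p F d a = (((W p F d a).re : ℝ) : ℂ) := by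
  rw [eq_comm, ← Complex.conj_eq_iff_re]
  rw [W, map_sum]
  rw [show ∑ x : F, (starRingEnd ℂ) (psiChar p F (x ^ d - a * x))
      = ∑ x : F, psiChar p F (a * x - x ^ d) from
    Finset.sum_congr rfl fun x _ => by rw [psiChar_conj]; congr 1; ring]
  apply Fintype.sum_equiv (Equiv.neg F)
  intro x
  simp only [Equiv.neg_apply]
  congr 1
  rw [neg_pow_d F p hd hgcd x]
  ring

lemma W_eq_weilSum (d : ℕ) (a : F) : W p F d a = weilSum F p d a :=
  Finset.sum_congr rfl fun x _ => psiChar_apply p F _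

end
end WeilAux

lemma eq_one_of_abs_re (z : ℂ) (h1 : ‖z‖ = 1) (h2 : z.re = 1) : z = 1 := by
  have hns : Complex.normSq z = 1 := by rw [← Complex.sq_norm, h1]; norm_num
  have him : z.im * z.im = 0 := by
    have := Complex.normSq_apply z
    rw [hns, h2] at this
    linarith
  exact Complex.ext (by simpa using h2) (by simpa using mul_self_eq_zero.mp him)

/-- If `d` is nondegenerate over `F`, then `W_{F,d}` takes a positive and a negative value. -/
theorem weilSum_pos_and_neg (F : Type*) [Field F] [Fintype F]
    (p : ℕ) [Fact p.Prime] [CharP F p] (d : ℕ) (hd : 0 < d)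
    (hgcd : Nat.gcd d (Fintype.card F - 1) = 1)
    (hndeg : ¬ ∃ k : ℕ, d ≡ p ^ k [MOD Fintype.card F - 1]) :
    (∃ a : F, ∃ r : ℝ, 0 < r ∧ weilSum F p d a = (r : ℂ)) ∧
      (∃ b : F, ∃ r : ℝ, r < 0 ∧ weilSum F p d b = (r : ℂ)) := by
  classical
  letI : Algebra (ZMod p) F := ZMod.algebra F p
  set q := Fintype.card F with hq
  have hq2 : 2 ≤ q := Fintype.one_lt_card
  have hqR : (0 : ℝ) < (q : ℝ) := by positivity
  set w : F → ℝ := fun a => (weilSum F p d a).re with hw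
  have hreal : ∀ a : F, weilSum F p d a = ((w a : ℝ) : ℂ) := by
    intro a
    rw [← WeilAux.W_eq_weilSum]
    exact (WeilAux.W_real p F d hd hgcd a).trans (by rw [WeilAux.W_eq_weilSum])
  have hsum1 : ∑ a : F, w a = (q : ℝ) := by
    have h1 := WeilAux.moment1 p F d hd
    have h2 : ∑ a : F, weilSum F p d a = (q : ℂ) := by
      rw [← h1]; exact Finset.sum_congr rfl fun a _ => (WeilAux.W_eq_weilSum p F d a).symm
    have := congrArg Complex.re h2
    rwa [Complex.re_sum, Complex.natCast_re] at this
  have hsum2 : ∑ a : F, (w a) ^ 2 = (q : ℝ) ^ 2 := by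
    have h1 := WeilAux.moment2 p F d hd hgcd
    have h2 : (((∑ a : F, (w a) ^ 2 : ℝ)) : ℂ) = (((q : ℝ) ^ 2 : ℝ) : ℂ) := by
      push_cast
      rw [← h1]
      exact Finset.sum_congr rfl fun a _ => by rw [WeilAux.W_eq_weilSum, hreal a]
    exact_mod_cast h2
  have hre1 : ∀ z : F, (WeilAux.psiChar p F z).re ≤ 1 := fun z =>
    (Complex.re_le_norm _).trans (le_of_eq (WeilAux.psiChar_abs p F z))
  have hwre : ∀ a : F, w a = ∑ x : F, (WeilAux.psiChar p F (x ^ d - a * x)).re := by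
    intro a
    rw [hw]
    simp only
    rw [← WeilAux.W_eq_weilSum, WeilAux.W, Complex.re_sum]
  have hle : ∀ a : F, w a ≤ (q : ℝ) := by
    intro a
    rw [hwre a]
    calc ∑ x : F, (WeilAux.psiChar p F (x ^ d - a * x)).re ≤ ∑ _x : F, (1 : ℝ) :=
          Finset.sum_le_sum fun x _ => hre1 _
      _ = (q : ℝ) := by rw [Finset.sum_const, Finset.card_univ, nsmul_eq_mul, mul_one]
  constructor
  · -- positive value
    by_contra hpos
    push_neg at hpos
    have h0 : ∀ a : F, w a ≤ 0 := by
      intro a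
      by_contra hwa
      push_neg at hwa
      exact hpos a (w a) hwa (hreal a)
    have : ∑ a : F, w a ≤ 0 := Finset.sum_nonpos fun a _ => h0 a
    rw [hsum1] at this
    linarith
  · -- negative value
    by_contra hneg
    push_neg at hneg
    have h0 : ∀ b : F, 0 ≤ w b := by
      intro b
      by_contra hwb
      push_neg at hwb
      exact hneg b (w b) hwb (hreal b)
    have key : ∑ a : F, w a * ((q : ℝ) - w a) = 0 := by
      have expand : ∀ a : F, w a * ((q : ℝ) - w a) = (q : ℝ) * w a - (w a) ^ 2 := by
        intro a; ring
      rw [Finset.sum_congr rfl fun a _ => expand a, Finset.sum_sub_distrib, ← Finset.mul_sum,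
        hsum1, hsum2]
      ring
    have hterm0 := (Finset.sum_eq_zero_iff_of_nonneg
      (fun a _ => mul_nonneg (h0 a) (sub_nonneg.mpr (hle a)))).mp key
    have hvals : ∀ a : F, w a = 0 ∨ w a = (q : ℝ) := by
      intro a
      rcases mul_eq_zero.mp (hterm0 a (Finset.mem_univ a)) with h | h
      · exact Or.inl h
      · exact Or.inr (by linarith [sub_eq_zero.mp h])
    have hex : ∃ a : F, w a = (q : ℝ) := by
      by_contra hno
      push_neg at hno
      have hall : ∀ a : F, w a = 0 := fun a => (hvals a).resolve_right (hno a)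
      rw [Finset.sum_congr rfl fun a _ => hall a, Finset.sum_const_zero] at hsum1
      linarith
    obtain ⟨a, hwa⟩ := hex
    have hterms : ∀ x : F, WeilAux.psiChar p F (x ^ d - a * x) = 1 := by
      have hsre : ∑ x : F, (WeilAux.psiChar p F (x ^ d - a * x)).re = ∑ _x : F, (1 : ℝ) := by
        rw [← hwre a, hwa, Finset.sum_const, Finset.card_univ, nsmul_eq_mul, mul_one]
      have := (Finset.sum_eq_sum_iff_of_le (fun (x : F) _ => hre1 (x ^ d - a * x))).mp hsre
      intro x
      exact eq_one_of_abs_re _ (WeilAux.psiChar_abs p F _) (this x (Finset.mem_univ x))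
    have hTr : ∀ x : F, Algebra.trace (ZMod p) F (x ^ d) = Algebra.trace (ZMod p) F (a * x) := by
      intro x
      have h1 := (WeilAux.psiChar_eq_one_iff p F (x ^ d - a * x)).mp (hterms x)
      rw [map_sub] at h1
      exact sub_eq_zero.mp h1
    exact hndeg (WeilAux.degenerate_of_trace_eq p F d hd hgcd a hTr)
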